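/- Let m ≥ 2 and let x0, x1 be distinct points of ℝ^{m+1} with ⟨x0,x0⟩_J = ⟨x1,x1⟩_J = 1. Then x1 is reachable from x0 by a spacelike geodesic — i.e. there exist u with ⟨u,u⟩_J = 1, ⟨u,x0⟩_J = 0 and t > 0 such that cos(t)·x0 + sin(t)·u = x1 — if and only if either −1 < ⟨x0,x1⟩_J < 1 (x1 lies strictly between the affine tangent hyperplanes at x0 and at −x0) or x1 = −x0. -/

import Mathlib

open Matrix Real

noncomputable section

/-- `J = diag(-1, I_m)` on `ℝ^{m+1}`. -/
def lorJ (m : ℕ) : Matrix (Fin (m+1)) (Fin (m+1)) ℝ :=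
  Matrix.diagonal (fun i => if i = 0 then (-1 : ℝ) else 1)

/-- The scalar product `⟨x,y⟩_J = xᵗ J y`. -/
def lorIp {m : ℕ} (x y : Fin (m+1) → ℝ) : ℝ :=
  x ⬝ᵥ (lorJ m) *ᵥ y

lemma lorIp_eq_sum {m : ℕ} (x y : Fin (m+1) → ℝ) :
    lorIp x y = ∑ i, (if i = 0 then (-1:ℝ) else 1) * (x i * y i) := by
  simp [lorIp, lorJ, Matrix.mulVec_diagonal, dotProduct]

lemma lorIp_comm {m : ℕ} (x y : Fin (m+1) → ℝ) : lorIp x y = lorIp y x := by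
  simp only [lorIp_eq_sum]; exact Finset.sum_congr rfl fun i _ => by ring

lemma lorIp_smul_left {m : ℕ} (a : ℝ) (x y : Fin (m+1) → ℝ) :
    lorIp (a • x) y = a * lorIp x y := by
  simp only [lorIp_eq_sum, Finset.mul_sum]
  exact Finset.sum_congr rfl fun i _ => by split <;> simp <;> ring

lemma lorIp_add_left {m : ℕ} (x y z : Fin (m+1) → ℝ) :
    lorIp (x + y) z = lorIp x z + lorIp y z := by
  simp only [lorIp_eq_sum, ← Finset.sum_add_distrib]
  exact Finset.sum_congr rfl fun i _ => by split <;> simp <;> ring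

lemma lorIp_sub_left {m : ℕ} (x y z : Fin (m+1) → ℝ) :
    lorIp (x - y) z = lorIp x z - lorIp y z := by
  simp only [lorIp_eq_sum, ← Finset.sum_sub_distrib]
  exact Finset.sum_congr rfl fun i _ => by split <;> simp <;> ring

lemma lorIp_smul_right {m : ℕ} (a : ℝ) (x y : Fin (m+1) → ℝ) :
    lorIp x (a • y) = a * lorIp x y := by
  rw [lorIp_comm, lorIp_smul_left, lorIp_comm]

lemma lorIp_add_right {m : ℕ} (x y z : Fin (m+1) → ℝ) :
    lorIp x (y + z) = lorIp x y + lorIp x z := by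
  rw [lorIp_comm, lorIp_add_left, lorIp_comm x y, lorIp_comm x z]

lemma lorIp_sub_right {m : ℕ} (x y z : Fin (m+1) → ℝ) :
    lorIp x (y - z) = lorIp x y - lorIp x z := by
  rw [lorIp_comm, lorIp_sub_left, lorIp_comm x y, lorIp_comm x z]

/-- Existence of a Euclidean-unit vector with vanishing zeroth coordinate that is
Euclidean-orthogonal to a given vector. -/
lemma exists_euclid_ortho {m : ℕ} (hm : 2 ≤ m) (x0 : Fin (m+1) → ℝ) :
    ∃ u : Fin (m+1) → ℝ, u 0 = 0 ∧ (∑ i, u i * u i) = 1 ∧ (∑ i, u i * x0 i) = 0 := by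
  classical
  set E := EuclideanSpace ℝ (Fin (m+1))
  let e0 : E := EuclideanSpace.single 0 1
  let xE : E := WithLp.toLp 2 x0
  set K := Submodule.span ℝ ({e0, xE} : Set E) with hK
  have h1 : ∀ v : E, Module.finrank ℝ (ℝ ∙ v) ≤ 1 := by
    intro v; by_cases h : v = 0
    · subst h; rw [Submodule.span_zero_singleton]; simp
    · exact (finrank_span_singleton h).le
  have hcard : Module.finrank ℝ K ≤ 2 := by
    rw [hK, Submodule.span_insert]
    exact (Submodule.finrank_add_le_finrank_add_finrank _ _).trans
      (add_le_add (h1 e0) (h1 xE))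
  have hE : Module.finrank ℝ E = m + 1 := finrank_euclideanSpace_fin
  have horth : Module.finrank ℝ K + Module.finrank ℝ Kᗮ = m + 1 := by
    have := K.finrank_add_finrank_orthogonal
    rwa [hE] at this
  have hpos : 0 < Module.finrank ℝ Kᗮ := by omega
  obtain ⟨u, huK, hu0⟩ := Submodule.exists_mem_ne_zero_of_ne_bot (p := Kᗮ) (by
    intro h; rw [h] at hpos; simp at hpos)
  have he0K : e0 ∈ K := Submodule.subset_span (by simp)
  have hxEK : xE ∈ K := Submodule.subset_span (by simp)
  have hip0 : (inner ℝ e0 u : ℝ) = 0 := (Submodule.mem_orthogonal K u).mp huK e0 he0K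
  have hipx : (inner ℝ xE u : ℝ) = 0 := (Submodule.mem_orthogonal K u).mp huK xE hxEK
  set w : E := ‖u‖⁻¹ • u with hw
  have hnu : ‖u‖ ≠ 0 := norm_ne_zero_iff.mpr hu0
  have hw1 : (inner ℝ w w : ℝ) = 1 := by
    rw [real_inner_self_eq_norm_sq, hw, norm_smul]
    simp [abs_of_nonneg (inv_nonneg.mpr (norm_nonneg u))]
    field_simp
    exact Or.inl (abs_norm u).symm
  refine ⟨w, ?_, ?_, ?_⟩
  · have : (inner ℝ e0 w : ℝ) = 0 := by rw [hw, inner_smul_right, hip0]; ring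
    rw [EuclideanSpace.inner_single_left] at this; simpa using this
  · have := hw1
    rwa [PiLp.inner_apply] at this
  · have : (inner ℝ xE w : ℝ) = 0 := by rw [hw, inner_smul_right, hipx]; ring
    rw [real_inner_comm, PiLp.inner_apply] at this
    simpa [xE, mul_comm] using this

/-- Existence of a spacelike unit vector Lorentz-orthogonal to a given vector. -/
lemma exists_lor_ortho {m : ℕ} (hm : 2 ≤ m) (x0 : Fin (m+1) → ℝ) :
    ∃ u : Fin (m+1) → ℝ, lorIp u u = 1 ∧ lorIp u x0 = 0 := by
  obtain ⟨u, h0, h1, h2⟩ := exists_euclid_ortho hm x0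
  refine ⟨u, ?_, ?_⟩
  · have hh : (∑ i, (if i = 0 then (-1:ℝ) else 1) * (u i * u i)) = ∑ i, u i * u i :=
      Finset.sum_congr rfl fun i _ => by
        rcases eq_or_ne i 0 with h | h <;> simp [h, h0]
    rw [lorIp_eq_sum, hh, h1]
  · have hh : (∑ i, (if i = 0 then (-1:ℝ) else 1) * (u i * x0 i)) = ∑ i, u i * x0 i :=
      Finset.sum_congr rfl fun i _ => by
        rcases eq_or_ne i 0 with h | h <;> simp [h, h0]
    rw [lorIp_eq_sum, hh, h2]

/-- For `m ≥ 2` and distinct `x0, x1 ∈ S_1^m`: `x1` is reachable from `x0` by a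
spacelike geodesic if and only if either `−1 < ⟨x0,x1⟩_J < 1` (i.e. `x1` lies strictly
between the affine tangent hyperplanes at `x0` and at `−x0`) or `x1 = −x0`. -/
theorem spacelike_geodesic_reachability (m : ℕ) (hm : 2 ≤ m)
    (x0 x1 : Fin (m+1) → ℝ)
    (hx0 : lorIp x0 x0 = 1) (hx1 : lorIp x1 x1 = 1) (hne : x1 ≠ x0) :
    (∃ u : Fin (m+1) → ℝ, lorIp u u = 1 ∧ lorIp u x0 = 0 ∧
        ∃ t : ℝ, 0 < t ∧ Real.cos t • x0 + Real.sin t • u = x1) ↔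
      ((-1 < lorIp x0 x1 ∧ lorIp x0 x1 < 1) ∨ x1 = -x0) := by
  constructor
  · rintro ⟨u, huu, hux0, t, ht, heq⟩
    have hc : lorIp x0 x1 = Real.cos t := by
      rw [← heq, lorIp_add_right, lorIp_smul_right, lorIp_smul_right, hx0,
        lorIp_comm x0 u, hux0]
      ring
    by_cases hs : Real.sin t = 0
    · have hcos2 : Real.cos t ^ 2 = 1 := by
        have h := Real.sin_sq_add_cos_sq t
        nlinarith
      have hcos : Real.cos t = 1 ∨ Real.cos t = -1 :=
        mul_self_eq_one_iff.mp (by nlinarith)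
      rcases hcos with h1 | h1
      · exact absurd (by rw [← heq, h1, hs]; simp) hne
      · right; rw [← heq, h1, hs]; simp
    · left
      have hs2 : 0 < Real.sin t ^ 2 := by positivity
      have hsq : Real.cos t ^ 2 < 1 := by nlinarith [Real.sin_sq_add_cos_sq t]
      rw [hc]; constructor <;> nlinarith
  · rintro (⟨h1, h2⟩ | h1)
    · set c := lorIp x0 x1 with hcdef
      have hs2 : (0:ℝ) < 1 - c ^ 2 := by nlinarith
      set s := Real.sqrt (1 - c ^ 2) with hsdef
      have hs : 0 < s := Real.sqrt_pos.mpr hs2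
      have hssq : s ^ 2 = 1 - c ^ 2 := Real.sq_sqrt hs2.le
      have hx10 : lorIp x1 x0 = c := by rw [lorIp_comm]
      refine ⟨s⁻¹ • (x1 - c • x0), ?_, ?_, Real.arccos c, Real.arccos_pos.mpr h2, ?_⟩
      · have e1 : lorIp (x1 - c • x0) (x1 - c • x0) = 1 - c ^ 2 := by
          rw [lorIp_sub_left, lorIp_sub_right, lorIp_sub_right, lorIp_smul_right,
            lorIp_smul_left, lorIp_smul_left, lorIp_smul_right, hx1, hx0, hx10, ← hcdef]
          ring
        rw [lorIp_smul_left, lorIp_smul_right, e1, ← hssq]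
        field_simp
      · rw [lorIp_smul_left, lorIp_sub_left, lorIp_smul_left, hx10, hx0]
        ring
      · rw [Real.cos_arccos h1.le h2.le, Real.sin_arccos, ← hsdef, smul_smul,
          mul_inv_cancel₀ hs.ne', one_smul]
        module
    · obtain ⟨u, huu, hux⟩ := exists_lor_ortho hm x0
      exact ⟨u, huu, hux, Real.pi, Real.pi_pos, by
        rw [Real.cos_pi, Real.sin_pi, h1]; module⟩
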